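/- For any invertible α ∈ M_ℓ(ℂ) and positive semidefinite ℓ×ℓ complex matrices X and Y, tgm(α*·X·α, α⁻¹·Y·(α⁻¹)*) = tgm(X,Y). -/

import Mathlib

open Matrix
open scoped ComplexOrder

/-- The square root of a positive semidefinite matrix (the definition of the older Mathlib's
`Matrix.PosSemidef.sqrt`, removed since). -/
noncomputable def Matrix.PosSemidef.sqrt {n : Type*} [Fintype n] [DecidableEq n]
    {A : Matrix n n ℂ} (hA : A.PosSemidef) : Matrix n n ℂ :=
  hA.1.eigenvectorUnitary.1 * diagonal ((↑) ∘ (√·) ∘ hA.1.eigenvalues) *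
    (star hA.1.eigenvectorUnitary : Matrix n n ℂ)

theorem Matrix.PosSemidef.posSemidef_sqrt {n : Type*} [Fintype n] [DecidableEq n]
    {A : Matrix n n ℂ} (hA : A.PosSemidef) : hA.sqrt.PosSemidef := by
  have hD : (diagonal ((↑) ∘ (√·) ∘ hA.1.eigenvalues : n → ℂ)).PosSemidef := by
    rw [posSemidef_diagonal_iff]
    intro i
    simp only [Function.comp_apply, Complex.zero_le_real]
    exact Real.sqrt_nonneg _
  have h := hD.mul_mul_conjTranspose_same (hA.1.eigenvectorUnitary : Matrix n n ℂ)
  unfold Matrix.PosSemidef.sqrt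
  convert h using 1
  first
  | rfl
  | rw [star_eq_conjTranspose]

/-- The product `√X * Y * √X` is positive semidefinite. -/
theorem sqrt_mul_mul_sqrt_posSemidef {n : Type*} [Fintype n] [DecidableEq n]
    {X Y : Matrix n n ℂ} (hX : X.PosSemidef) (hY : Y.PosSemidef) :
    (hX.sqrt * Y * hX.sqrt).PosSemidef := by
  have h := hY.conjTranspose_mul_mul_same (B := hX.sqrt)
  rwa [hX.posSemidef_sqrt.isHermitian.eq] at h

/-- The tracial geometric mean `tgm(X,Y) = trace √(√X·Y·√X)`. -/
noncomputable def tgm {n : Type*} [Fintype n] [DecidableEq n]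
    {X Y : Matrix n n ℂ} (hX : X.PosSemidef) (hY : Y.PosSemidef) : ℝ :=
  ((sqrt_mul_mul_sqrt_posSemidef hX hY).sqrt.trace).re

open Polynomial in
/-- `charpoly (A*B) = charpoly (B*A)` over `ℂ`. -/
lemma my_charpoly_mul_comm {n : Type*} [Fintype n] [DecidableEq n]
    (A B : Matrix n n ℂ) : (A * B).charpoly = (B * A).charpoly := by
  classical
  set A' : Matrix n n ℂ[X] := (C : ℂ →+* ℂ[X]).mapMatrix A with hA'
  set B' : Matrix n n ℂ[X] := (C : ℂ →+* ℂ[X]).mapMatrix B with hB'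
  set s : Matrix n n ℂ[X] := Matrix.scalar n (X : ℂ[X]) with hs
  have hsM : ∀ M : Matrix n n ℂ[X], s * M = (X : ℂ[X]) • M := by
    intro M
    ext i j
    simp [hs, Matrix.scalar_apply, Matrix.diagonal_mul]
  have hMs : ∀ M : Matrix n n ℂ[X], M * s = (X : ℂ[X]) • M := by
    intro M
    ext i j
    simp [hs, Matrix.scalar_apply, Matrix.mul_diagonal, mul_comm]
  have key1 : fromBlocks s A' ((X : ℂ[X]) • B') s
      = fromBlocks 1 0 B' 1 * fromBlocks s A' 0 (s - B' * A') := by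
    rw [Matrix.fromBlocks_multiply]
    have h22 : B' * A' + (s - B' * A') = s := by abel
    have hs1 : (X : ℂ[X]) • (1 : Matrix n n ℂ[X]) = s := by rw [← hMs 1, Matrix.one_mul]
    simp only [Matrix.one_mul, Matrix.zero_mul, Matrix.mul_zero, Matrix.mul_one, add_zero,
      zero_add, hMs, h22, hs1]
  have key2 : fromBlocks s A' ((X : ℂ[X]) • B') s
      = fromBlocks (s - A' * B') A' 0 s * fromBlocks 1 0 B' 1 := by
    rw [Matrix.fromBlocks_multiply]
    have h11 : s - A' * B' + A' * B' = s := by abel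
    have hs1 : (X : ℂ[X]) • (1 : Matrix n n ℂ[X]) = s := by rw [← hsM 1, Matrix.mul_one]
    simp only [Matrix.one_mul, Matrix.zero_mul, Matrix.mul_zero, Matrix.mul_one, add_zero,
      zero_add, hsM, h11, hs1]
  have hdet := congrArg Matrix.det (key1.symm.trans key2)
  rw [Matrix.det_mul, Matrix.det_mul, Matrix.det_fromBlocks_zero₁₂,
    Matrix.det_fromBlocks_zero₂₁, Matrix.det_fromBlocks_zero₂₁, Matrix.det_one] at hdet
  simp only [one_mul, mul_one] at hdet
  have hds : s.det = (X : ℂ[X]) ^ Fintype.card n := by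
    simp [hs, Matrix.scalar_apply, Matrix.det_diagonal]
  have hXn : (X : ℂ[X]) ^ Fintype.card n ≠ 0 := pow_ne_zero _ X_ne_zero
  have hcm : ∀ M N : Matrix n n ℂ, charmatrix (M * N)
      = s - (C : ℂ →+* ℂ[X]).mapMatrix M * (C : ℂ →+* ℂ[X]).mapMatrix N := by
    intro M N
    rw [charmatrix, RingHom.map_mul]
  rw [Matrix.charpoly, Matrix.charpoly, hcm, hcm, ← hA', ← hB']
  rw [hds, mul_comm ((s - A' * B').det)] at hdet
  exact (mul_left_cancel₀ hXn hdet).symm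

open Polynomial in
lemma my_charpoly_diagonal {n : Type*} [Fintype n] [DecidableEq n] (d : n → ℂ) :
    (Matrix.diagonal d).charpoly = ∏ i, (X - C (d i)) := by
  have h : charmatrix (Matrix.diagonal d) = Matrix.diagonal fun i => (X : ℂ[X]) - C (d i) := by
    ext i j
    rcases eq_or_ne i j with rfl | hij
    · simp
    · simp [hij, Matrix.diagonal_apply_ne _ hij]
  rw [Matrix.charpoly, h, Matrix.det_diagonal]

open Polynomial in
/-- The charpoly of a Hermitian matrix in terms of its eigenvalues. -/
lemma my_charpoly_hermitian {n : Type*} [Fintype n] [DecidableEq n]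
    {A : Matrix n n ℂ} (hA : A.IsHermitian) :
    A.charpoly = ∏ i, (X - C ((hA.eigenvalues i : ℂ))) := by
  set U : Matrix n n ℂ := (Matrix.IsHermitian.eigenvectorUnitary hA : Matrix n n ℂ) with hU
  have hUU : star U * U = 1 :=
    Matrix.mem_unitaryGroup_iff'.mp (Matrix.IsHermitian.eigenvectorUnitary hA).2
  have hspec := hA.spectral_theorem
  calc A.charpoly
      = (U * (Matrix.diagonal (RCLike.ofReal ∘ hA.eigenvalues) * star U)).charpoly := by
        rw [← mul_assoc]
        conv_lhs => rw [hspec, Unitary.conjStarAlgAut_apply]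
    _ = ((Matrix.diagonal (RCLike.ofReal ∘ hA.eigenvalues) * star U) * U).charpoly :=
        my_charpoly_mul_comm _ _
    _ = (Matrix.diagonal (RCLike.ofReal ∘ hA.eigenvalues)).charpoly := by
        rw [mul_assoc, hUU, mul_one]
    _ = ∏ i, (X - C ((hA.eigenvalues i : ℂ))) := my_charpoly_diagonal _

lemma my_sqrt_mul_self {n : Type*} [Fintype n] [DecidableEq n]
    {A : Matrix n n ℂ} (hA : A.PosSemidef) : hA.sqrt * hA.sqrt = A := by
  have hUU : star (hA.1.eigenvectorUnitary : Matrix n n ℂ) * hA.1.eigenvectorUnitary = 1 :=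
    Matrix.mem_unitaryGroup_iff'.mp hA.1.eigenvectorUnitary.2
  unfold Matrix.PosSemidef.sqrt
  conv_rhs => rw [hA.1.spectral_theorem, Unitary.conjStarAlgAut_apply]
  simp only [mul_assoc]
  rw [← mul_assoc (star _) _, hUU, one_mul, ← mul_assoc (diagonal _), diagonal_mul_diagonal]
  congr 3
  funext i
  simp only [Function.comp_apply]
  rw [← Complex.ofReal_mul, Real.mul_self_sqrt (hA.eigenvalues_nonneg i)]
  rfl

open Polynomial in
/-- The real part of the trace of the PSD square root depends only on the charpoly. -/
lemma my_trace_sqrt_eq {n : Type*} [Fintype n] [DecidableEq n]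
    {M : Matrix n n ℂ} (hM : M.PosSemidef) :
    (hM.sqrt.trace).re = (M.charpoly.roots.map fun z => Real.sqrt z.re).sum := by
  classical
  set U : Matrix n n ℂ := (Matrix.IsHermitian.eigenvectorUnitary hM.1 : Matrix n n ℂ) with hU
  have hUU : star U * U = 1 :=
    Matrix.mem_unitaryGroup_iff'.mp (Matrix.IsHermitian.eigenvectorUnitary hM.1).2
  have htr : hM.sqrt.trace = ∑ i, ((Real.sqrt (hM.1.eigenvalues i) : ℂ)) := by
    rw [Matrix.PosSemidef.sqrt, Matrix.trace_mul_comm, ← mul_assoc, hUU, one_mul,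
      Matrix.trace_diagonal]
    rfl
  have hroots : M.charpoly.roots
      = Finset.univ.val.map fun i => ((hM.1.eigenvalues i : ℂ)) := by
    rw [my_charpoly_hermitian hM.1]
    rw [← Polynomial.roots_multiset_prod_X_sub_C
      (Finset.univ.val.map fun i => ((hM.1.eigenvalues i : ℂ)))]
    congr 1
    rw [Multiset.map_map]
    rfl
  rw [htr, hroots, Multiset.map_map]
  rw [Complex.re_sum]
  rw [Finset.sum_eq_multiset_sum]
  congr 1

open Polynomial in
set_option maxHeartbeats 1000000 in
/-- For invertible `α`, `tgm(α*·X·α, α⁻¹·Y·(α⁻¹)*) = tgm(X,Y)`. -/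
theorem tgm_congr_invertible {ℓ : ℕ} {X Y : Matrix (Fin ℓ) (Fin ℓ) ℂ}
    (hX : X.PosSemidef) (hY : Y.PosSemidef)
    {α : Matrix (Fin ℓ) (Fin ℓ) ℂ} (hα : IsUnit α) :
    tgm (hX.conjTranspose_mul_mul_same α) (hY.mul_mul_conjTranspose_same α⁻¹) = tgm hX hY := by
  have hdet : IsUnit α.det := (Matrix.isUnit_iff_isUnit_det α).mp hα
  have hαinv : α * α⁻¹ = 1 := Matrix.mul_nonsing_inv α hdet
  set hX' := hX.conjTranspose_mul_mul_same α with hX'def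
  set hY' := hY.mul_mul_conjTranspose_same α⁻¹ with hY'def
  have hc1 : ∀ {Z W : Matrix (Fin ℓ) (Fin ℓ) ℂ} (hZ : Z.PosSemidef) (_ : W.PosSemidef),
      (hZ.sqrt * W * hZ.sqrt).charpoly = (W * Z).charpoly := by
    intro Z W hZ _
    calc (hZ.sqrt * W * hZ.sqrt).charpoly
        = (hZ.sqrt * (W * hZ.sqrt)).charpoly := by rw [mul_assoc]
      _ = ((W * hZ.sqrt) * hZ.sqrt).charpoly := my_charpoly_mul_comm _ _
      _ = (W * Z).charpoly := by rw [mul_assoc, my_sqrt_mul_self hZ]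
  have hYX : (α⁻¹ * Y * α⁻¹ᴴ) * (αᴴ * X * α) = α⁻¹ * (Y * (X * α)) := by
    have h1 : α⁻¹ᴴ * (αᴴ * (X * α)) = X * α := by
      rw [← Matrix.mul_assoc, ← Matrix.conjTranspose_mul, hαinv, Matrix.conjTranspose_one,
        Matrix.one_mul]
    simp only [Matrix.mul_assoc]
    rw [h1]
  have h2 : ((α⁻¹ * Y * α⁻¹ᴴ) * (αᴴ * X * α)).charpoly = (Y * X).charpoly := by
    rw [hYX, my_charpoly_mul_comm]
    congr 1
    simp only [Matrix.mul_assoc]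
    rw [hαinv, Matrix.mul_one]
  have hM : (hX'.sqrt * (α⁻¹ * Y * α⁻¹ᴴ) * hX'.sqrt).charpoly
      = (hX.sqrt * Y * hX.sqrt).charpoly := by
    rw [hc1 hX' hY', hc1 hX hY, h2]
  have h3 := my_trace_sqrt_eq (sqrt_mul_mul_sqrt_posSemidef hX' hY')
  have h4 := my_trace_sqrt_eq (sqrt_mul_mul_sqrt_posSemidef hX hY)
  exact h3.trans ((congrArg
    (fun p : Polynomial ℂ => (p.roots.map fun z => Real.sqrt z.re).sum) hM).trans h4.symm)
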